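/- Let 1 ≤ p < ∞ and let D₁, ..., Dₘ be bounded multiplication operators on L^p(X,μ) with D₁ ⋯ Dₘ = I. Then for every bounded operator A on L^p(X,μ), ‖A‖^m ≤ ‖A D₁‖·‖A D₂‖ ⋯ ‖A Dₘ‖. -/

import Mathlib

open MeasureTheory ENNReal Complex Set Filter

namespace CohenAux

variable {X : Type*} [MeasurableSpace X] {μ : Measure X} {p : ℝ≥0∞} [Fact (1 ≤ p)]


/-- `T` acts as multiplication by `b`. -/
def IsMulOp (μ : Measure X) (p : ℝ≥0∞) [Fact (1 ≤ p)] (b : X → ℂ)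
    (T : Lp ℂ p μ →L[ℂ] Lp ℂ p μ) : Prop :=
  ∀ f : Lp ℂ p μ, (T f : X → ℂ) =ᵐ[μ] fun x => b x * f x

theorem IsMulOp.comp {b c : X → ℂ} {T S : Lp ℂ p μ →L[ℂ] Lp ℂ p μ}
    (hT : IsMulOp μ p b T) (hS : IsMulOp μ p c S) :
    IsMulOp μ p (fun x => b x * c x) (T.comp S) := by
  intro f
  refine (hT (S f)).trans ?_
  filter_upwards [hS f] with x hx
  simp [hx, mul_assoc]

theorem IsMulOp.congr {b c : X → ℂ} {T : Lp ℂ p μ →L[ℂ] Lp ℂ p μ}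
    (hT : IsMulOp μ p b T) (h : b =ᵐ[μ] c) : IsMulOp μ p c T := by
  intro f
  refine (hT f).trans ?_
  filter_upwards [h] with x hx using by simp [hx]

theorem IsMulOp.ext {b : X → ℂ} {T S : Lp ℂ p μ →L[ℂ] Lp ℂ p μ}
    (hT : IsMulOp μ p b T) (hS : IsMulOp μ p b S) : T = S := by
  ext f
  exact ((hT f).trans (hS f).symm)

omit [Fact (1 ≤ p)] in
theorem memℒp_mul {b : X → ℂ} (hb : AEStronglyMeasurable b μ) {B : ℝ}
    (hbd : ∀ᵐ x ∂μ, ‖b x‖ ≤ B) (f : Lp ℂ p μ) :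
    MemLp (fun x => b x * (f : X → ℂ) x) p μ := by
  have := (Lp.memLp f).smul (memLp_top_of_bound hb B hbd) (r := p)
  exact this.ae_eq (Eventually.of_forall fun x => by simp [mul_comm])

/-- Multiplication operator by a bounded (a.e.) measurable function. -/
noncomputable def mulOp (b : X → ℂ) (hb : AEStronglyMeasurable b μ) (B : ℝ) (hB : 0 ≤ B)
    (hbd : ∀ᵐ x ∂μ, ‖b x‖ ≤ B) : Lp ℂ p μ →L[ℂ] Lp ℂ p μ :=
  LinearMap.mkContinuous
    { toFun := fun f => (memℒp_mul hb hbd f).toLp _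
      map_add' := by
        intro f g
        rw [← MemLp.toLp_add (memℒp_mul hb hbd f) (memℒp_mul hb hbd g)]
        refine MemLp.toLp_congr _ _ ?_
        filter_upwards [Lp.coeFn_add f g] with x hx
        rw [hx, Pi.add_apply, mul_add]; rfl
      map_smul' := by
        intro c f
        simp only [RingHom.id_apply]
        show MemLp.toLp _ (memℒp_mul hb hbd (c • f)) = c • MemLp.toLp _ (memℒp_mul hb hbd f)
        rw [← MemLp.toLp_const_smul c (memℒp_mul hb hbd f)]
        refine MemLp.toLp_congr _ _ ?_
        filter_upwards [Lp.coeFn_smul c f] with x hx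
        simp [hx]
        ring }
    B
    (by
      intro f
      simp only [LinearMap.coe_mk, AddHom.coe_mk]
      rw [Lp.norm_toLp]
      have h1 : ∀ᵐ x ∂μ, ‖b x * (f : X → ℂ) x‖ ≤ B * ‖(f : X → ℂ) x‖ := by
        filter_upwards [hbd] with x hx
        rw [norm_mul]
        exact mul_le_mul_of_nonneg_right hx (norm_nonneg _)
      have h2 := eLpNorm_le_mul_eLpNorm_of_ae_le_mul h1 p
      have h3 : ENNReal.ofReal B * eLpNorm (f : X → ℂ) p μ ≠ ∞ :=
        ENNReal.mul_ne_top ofReal_ne_top (Lp.eLpNorm_ne_top f)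
      calc (eLpNorm (fun x => b x * (f : X → ℂ) x) p μ).toReal
          ≤ (ENNReal.ofReal B * eLpNorm (f : X → ℂ) p μ).toReal :=
            ENNReal.toReal_mono h3 h2
        _ = B * ‖f‖ := by
            rw [ENNReal.toReal_mul, ENNReal.toReal_ofReal hB, Lp.norm_def]
        )

theorem isMulOp_mulOp (b : X → ℂ) (hb : AEStronglyMeasurable b μ) (B : ℝ) (hB : 0 ≤ B)
    (hbd : ∀ᵐ x ∂μ, ‖b x‖ ≤ B) : IsMulOp μ p b (mulOp b hb B hB hbd) := by
  intro f
  have h : mulOp b hb B hB hbd f = MemLp.toLp _ (memℒp_mul hb hbd f) := rfl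
  rw [h]
  exact MemLp.coeFn_toLp (memℒp_mul hb hbd f)

theorem norm_mulOp_le (b : X → ℂ) (hb : AEStronglyMeasurable b μ) (B : ℝ) (hB : 0 ≤ B)
    (hbd : ∀ᵐ x ∂μ, ‖b x‖ ≤ B) : ‖(mulOp b hb B hB hbd : Lp ℂ p μ →L[ℂ] Lp ℂ p μ)‖ ≤ B :=
  LinearMap.mkContinuous_norm_le _ hB _



theorem symbol_aestronglyMeasurable [SigmaFinite μ] {b : X → ℂ}
    {T : Lp ℂ p μ →L[ℂ] Lp ℂ p μ} (hT : IsMulOp μ p b T) :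
    AEStronglyMeasurable b μ := by
  have key : ∀ n : ℕ, AEStronglyMeasurable ((spanningSets μ n).indicator b) μ := by
    intro n
    set f : Lp ℂ p μ := indicatorConstLp p (measurableSet_spanningSets μ n)
      (measure_spanningSets_lt_top μ n).ne (1 : ℂ) with hf
    refine (Lp.aestronglyMeasurable (T f)).congr ?_
    refine (hT f).trans ?_
    filter_upwards [indicatorConstLp_coeFn (p := p)
      (hs := measurableSet_spanningSets μ n) (hμs := (measure_spanningSets_lt_top μ n).ne)
      (c := (1:ℂ))] with x hx
    rw [hf]
    simp only [hx, Set.indicator_apply]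
    by_cases h : x ∈ spanningSets μ n <;> simp [h]
  refine aestronglyMeasurable_of_tendsto_ae atTop key ?_
  refine Eventually.of_forall fun x => ?_
  have hx : x ∈ ⋃ n, spanningSets μ n := by rw [iUnion_spanningSets]; trivial
  rcases mem_iUnion.1 hx with ⟨n₀, hn₀⟩
  refine tendsto_atTop_of_eventually_const (i₀ := n₀) fun n hn => ?_
  have : x ∈ spanningSets μ n := monotone_spanningSets μ hn hn₀
  simp [Set.indicator_of_mem this]

theorem symbol_ae_norm_le [SigmaFinite μ] (hp : p ≠ ∞) {b : X → ℂ} (hbm : Measurable b)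
    {T : Lp ℂ p μ →L[ℂ] Lp ℂ p μ} (hT : IsMulOp μ p b T) :
    ∀ᵐ x ∂μ, ‖b x‖ ≤ ‖T‖ := by
  have hp0 : p ≠ 0 := (lt_of_lt_of_le zero_lt_one Fact.out).ne'
  have key : ∀ r : ℝ, 0 < r → μ {x | ‖T‖ + r ≤ ‖b x‖} = 0 := by
    intro r hr
    have hs : MeasurableSet {x | ‖T‖ + r ≤ ‖b x‖} := measurableSet_le measurable_const hbm.norm
    by_contra hμs
    obtain ⟨t, htm, hts, h0t, htop⟩ := MeasureTheory.Measure.exists_subset_measure_lt_top hs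
      (lt_of_le_of_ne (zero_le) (Ne.symm hμs))
    set f : Lp ℂ p μ := indicatorConstLp p htm htop.ne (1 : ℂ) with hfdef
    set g : Lp ℂ p μ := indicatorConstLp p htm htop.ne ((‖T‖ + r : ℝ) : ℂ) with hgdef
    have hβpos : 0 < (μ t).toReal ^ (1 / p.toReal) := by
      refine Real.rpow_pos_of_pos ?_ _
      exact ENNReal.toReal_pos h0t.ne' htop.ne
    have hle : ‖g‖ ≤ ‖T f‖ := by
      rw [Lp.norm_def, Lp.norm_def]
      refine ENNReal.toReal_mono (Lp.eLpNorm_ne_top (T f)) ?_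
      rw [eLpNorm_congr_ae (hT f),
        eLpNorm_congr_ae (indicatorConstLp_coeFn (p := p) (hs := htm) (hμs := htop.ne)
          (c := ((‖T‖ + r : ℝ) : ℂ)))]
      refine eLpNorm_mono_ae ?_
      filter_upwards [indicatorConstLp_coeFn (p := p) (hs := htm) (hμs := htop.ne)
        (c := (1:ℂ))] with x hx
      rw [hx]
      by_cases h : x ∈ t
      · simp only [Set.indicator_of_mem h, norm_mul, norm_one, mul_one]
        rw [Complex.norm_real, Real.norm_eq_abs,
          _root_.abs_of_nonneg (by positivity : (0:ℝ) ≤ ‖T‖ + r)]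
        exact hts h
      · simp [Set.indicator_of_notMem h]
    have h2 : ‖T f‖ ≤ ‖T‖ * ‖f‖ := T.le_opNorm f
    rw [norm_indicatorConstLp hp0 hp] at hle h2
    rw [Complex.norm_real, Real.norm_eq_abs,
      _root_.abs_of_nonneg (by positivity : (0:ℝ) ≤ ‖T‖ + r)] at hle
    have h3 := hle.trans h2
    rw [norm_one, one_mul] at h3
    have h4 := le_of_mul_le_mul_right h3 hβpos
    linarith
  rw [ae_iff]
  refine measure_mono_null (fun x hx => ?_)
    (measure_iUnion_null (s := fun n : ℕ => {x | ‖T‖ + 1/(n+1) ≤ ‖b x‖})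
      fun n => key _ (by positivity))
  simp only [mem_setOf_eq, not_le] at hx
  obtain ⟨n, hn⟩ := exists_nat_one_div_lt (sub_pos.mpr hx)
  refine mem_iUnion.2 ⟨n, ?_⟩
  simp only [mem_setOf_eq]
  push_cast at hn ⊢
  linarith

set_option maxHeartbeats 2000000 in
theorem core {u v : X → ℝ} (hum : Measurable u) (hvm : Measurable v)
    {ε K : ℝ} (hε : 0 < ε)
    (hub : ∀ᵐ x ∂μ, u x ∈ Set.Icc ε K) (hvb : ∀ᵐ x ∂μ, v x ∈ Set.Icc ε K)
    {θ : ℝ} (hθ0 : 0 ≤ θ) (hθ1 : θ ≤ 1)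
    {Mu Mv Mθ : Lp ℂ p μ →L[ℂ] Lp ℂ p μ}
    (hMu : IsMulOp μ p (fun x => (u x : ℂ)) Mu)
    (hMv : IsMulOp μ p (fun x => (v x : ℂ)) Mv)
    (hMθ : IsMulOp μ p (fun x => ((u x ^ (1 - θ) * v x ^ θ : ℝ) : ℂ)) Mθ)
    (A : Lp ℂ p μ →L[ℂ] Lp ℂ p μ) :
    ‖A.comp Mθ‖ ≤ ‖A.comp Mu‖ ^ (1 - θ) * ‖A.comp Mv‖ ^ θ := by
  -- the log-ratio weight
  set w : X → ℝ := fun x => Real.log (v x) - Real.log (u x) with hw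
  have hwm : Measurable w := (Real.measurable_log.comp hvm).sub (Real.measurable_log.comp hum)
  set W : ℝ := max 0 (Real.log K - Real.log ε) with hWdef
  have hW0 : 0 ≤ W := le_max_left _ _
  have hwB : ∀ᵐ x ∂μ, |w x| ≤ W := by
    filter_upwards [hub, hvb] with x hu hv
    have hup : 0 < u x := lt_of_lt_of_le hε hu.1
    have hvp : 0 < v x := lt_of_lt_of_le hε hv.1
    have h1 : Real.log ε ≤ Real.log (u x) := Real.log_le_log hε hu.1
    have h2 : Real.log (u x) ≤ Real.log K := Real.log_le_log hup hu.2
    have h3 : Real.log ε ≤ Real.log (v x) := Real.log_le_log hε hv.1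
    have h4 : Real.log (v x) ≤ Real.log K := Real.log_le_log hvp hv.2
    rw [abs_le]
    constructor
    · have : -(Real.log K - Real.log ε) ≤ w x := by simp only [hw]; linarith
      refine le_trans ?_ this
      simp only [neg_le_neg_iff, hWdef]
      exact le_max_right _ _
    · refine le_trans ?_ (le_max_right _ _)
      simp only [hw]; linarith
  have hwBc : ∀ z : ℂ, ∀ᵐ x ∂μ, ‖Complex.exp (z * (w x : ℂ))‖ ≤ Real.exp (‖z‖ * W) := by
    intro z
    filter_upwards [hwB] with x hx
    rw [Complex.norm_exp]
    refine Real.exp_le_exp.2 ?_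
    have h1 : (z * (w x : ℂ)).re = z.re * w x := by
      simp [Complex.mul_re]
    rw [h1]
    calc z.re * w x ≤ |z.re * w x| := le_abs_self _
      _ = |z.re| * |w x| := abs_mul _ _
      _ ≤ ‖z‖ * W := by
          refine mul_le_mul (Complex.abs_re_le_norm z) hx (abs_nonneg _) (norm_nonneg z)
  -- the analytic family z ↦ e^{zw} f  (for a fixed f)
  have hexpm : ∀ z : ℂ, AEStronglyMeasurable (fun x => Complex.exp (z * (w x : ℂ))) μ :=
    fun z => (Complex.measurable_exp.comp
      (measurable_const.mul (Complex.measurable_ofReal.comp hwm))).aestronglyMeasurable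
  have hprodm : ∀ z : ℂ, AEStronglyMeasurable
      (fun x => (w x : ℂ) * Complex.exp (z * (w x : ℂ))) μ := fun z =>
    ((Complex.measurable_ofReal.comp hwm).mul (Complex.measurable_exp.comp
      (measurable_const.mul (Complex.measurable_ofReal.comp hwm)))).aestronglyMeasurable
  have key : ∀ f : Lp ℂ p μ, ‖(A.comp Mθ) f‖ ≤
      (‖A.comp Mu‖ ^ (1 - θ) * ‖A.comp Mv‖ ^ θ) * ‖f‖ := by
    intro f
    by_cases hf0 : f = 0
    · simp [hf0]
    have hfpos : 0 < ‖f‖ := norm_pos_iff.2 hf0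
    -- memberships
    have hmem : ∀ z : ℂ, MemLp (fun x => Complex.exp (z * (w x : ℂ)) * (f : X → ℂ) x) p μ :=
      fun z => memℒp_mul (hexpm z) (hwBc z) f
    have hmem' : ∀ z : ℂ, MemLp
        (fun x => ((w x : ℂ) * Complex.exp (z * (w x : ℂ))) * (f : X → ℂ) x) p μ := by
      intro z
      refine memℒp_mul (hprodm z) (B := W * Real.exp (‖z‖ * W)) ?_ f
      filter_upwards [hwB, hwBc z] with x h1 h2
      rw [norm_mul]
      refine mul_le_mul ?_ h2 (norm_nonneg _) hW0
      rwa [Complex.norm_real, Real.norm_eq_abs]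
    set E : ℂ → Lp ℂ p μ := fun z => ((hmem z).toLp _) with hE
    -- norm bound for E
    have hEnorm : ∀ z : ℂ, ∀ c : ℝ, 0 ≤ c →
        (∀ᵐ x ∂μ, ‖Complex.exp (z * (w x : ℂ))‖ ≤ c) → ‖E z‖ ≤ c * ‖f‖ := by
      intro z c hc0 hc
      rw [hE, Lp.norm_toLp]
      have h1 : ∀ᵐ x ∂μ, ‖Complex.exp (z * (w x : ℂ)) * (f : X → ℂ) x‖ ≤
          c * ‖(f : X → ℂ) x‖ := by
        filter_upwards [hc] with x hx
        rw [norm_mul]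
        exact mul_le_mul_of_nonneg_right hx (norm_nonneg _)
      have h2 := eLpNorm_le_mul_eLpNorm_of_ae_le_mul h1 p
      have h3 : ENNReal.ofReal c * eLpNorm (f : X → ℂ) p μ ≠ ∞ :=
        ENNReal.mul_ne_top ofReal_ne_top (Lp.eLpNorm_ne_top f)
      calc (eLpNorm (fun x => Complex.exp (z * (w x:ℂ)) * (f : X → ℂ) x) p μ).toReal
          ≤ (ENNReal.ofReal c * eLpNorm (f : X → ℂ) p μ).toReal := ENNReal.toReal_mono h3 h2
        _ = c * ‖f‖ := by rw [ENNReal.toReal_mul, ENNReal.toReal_ofReal hc0, Lp.norm_def]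
    -- differentiability of E
    have hderiv : ∀ z : ℂ, HasDerivAt E ((hmem' z).toLp _) z := by
      intro z
      rw [hasDerivAt_iff_isLittleO]
      set C₀ : ℝ := Real.exp (‖z‖ * W + W) * W ^ 2 with hC₀
      have hC₀0 : 0 ≤ C₀ := by positivity
      have hest : ∀ z' : ℂ, ‖z' - z‖ ≤ 1 / (W + 1) →
          ‖E z' - E z - (z' - z) • (hmem' z).toLp _‖ ≤ (C₀ * ‖f‖) * ‖z' - z‖ ^ 2 := by
        intro z' hz'
        set h : ℂ := z' - z with hh
        have e1 : E z' - E z - h • (hmem' z).toLp _ =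
            MemLp.toLp _ (((hmem z').sub (hmem z)).sub ((hmem' z).const_smul h)) := by
          rw [hE]
          rw [← MemLp.toLp_const_smul h (hmem' z), ← MemLp.toLp_sub (hmem z') (hmem z),
            ← MemLp.toLp_sub ((hmem z').sub (hmem z)) ((hmem' z).const_smul h)]
        rw [e1, Lp.norm_toLp]
        have hptw : ∀ᵐ x ∂μ,
            ‖((fun x => Complex.exp (z' * (w x:ℂ)) * (f : X → ℂ) x) -
                (fun x => Complex.exp (z * (w x:ℂ)) * (f : X → ℂ) x) -
                h • fun x => ((w x : ℂ) * Complex.exp (z * (w x : ℂ))) * (f : X → ℂ) x) x‖ ≤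
              (C₀ * ‖h‖ ^ 2) * ‖(f : X → ℂ) x‖ := by
          filter_upwards [hwB] with x hx
          have efact : Complex.exp (z' * (w x:ℂ)) * (f : X → ℂ) x -
              Complex.exp (z * (w x:ℂ)) * (f : X → ℂ) x -
              h * (((w x : ℂ) * Complex.exp (z * (w x : ℂ))) * (f : X → ℂ) x) =
              (Complex.exp (z * (w x:ℂ)) *
                (Complex.exp (h * (w x:ℂ)) - 1 - h * (w x:ℂ))) * (f : X → ℂ) x := by
            have : z' * (w x : ℂ) = z * (w x:ℂ) + h * (w x:ℂ) := by rw [hh]; ring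
            rw [this, Complex.exp_add]
            ring
          simp only [Pi.sub_apply, Pi.smul_apply, smul_eq_mul]
          rw [efact, norm_mul, norm_mul]
          have hhw : ‖h * (w x : ℂ)‖ ≤ 1 := by
            rw [norm_mul]
            have h2 : ‖(w x : ℂ)‖ ≤ W := by
              rw [Complex.norm_real, Real.norm_eq_abs]; exact hx
            calc ‖h‖ * ‖(w x : ℂ)‖ ≤ (1/(W+1)) * W := by
                  refine mul_le_mul hz' h2 (norm_nonneg _) (by positivity)
              _ ≤ 1 := by
                  rw [div_mul_eq_mul_div, one_mul, div_le_one (by positivity)]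
                  linarith
          have hb2 : ‖Complex.exp (h * (w x:ℂ)) - 1 - h * (w x:ℂ)‖ ≤ ‖h‖^2 * W^2 := by
            have := Complex.exp_bound hhw (n := 2) (by norm_num)
            have hsum : ∑ m ∈ Finset.range 2, (h * (w x:ℂ)) ^ m / m.factorial =
                1 + h * (w x:ℂ) := by
              simp [Finset.sum_range_succ]
            rw [hsum] at this
            have h34 : ‖h * ↑(w x)‖ ^ 2 * ((2:ℕ).succ * ((2:ℕ).factorial * 2 : ℝ)⁻¹)
                ≤ ‖h * ↑(w x)‖ ^ 2 := by
              have : ((2:ℕ).succ * ((2:ℕ).factorial * 2 : ℝ)⁻¹) ≤ 1 := by norm_num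
              nlinarith [sq_nonneg (‖h * ↑(w x)‖)]
            have habs : ‖h * ↑(w x)‖ ^ 2 ≤ ‖h‖^2 * W^2 := by
              rw [norm_mul]
              have h2 : ‖(w x : ℂ)‖ ≤ W := by rw [Complex.norm_real, Real.norm_eq_abs]; exact hx
              have := mul_le_mul (le_refl ‖h‖) h2 (norm_nonneg _)
                (norm_nonneg _)
              calc (‖h‖ * ‖(w x:ℂ)‖)^2 ≤ (‖h‖ * W)^2 := by
                    refine pow_le_pow_left₀ (by positivity) this 2
                _ = ‖h‖^2 * W^2 := by rw [mul_pow]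
            calc ‖Complex.exp (h * (w x:ℂ)) - 1 - h * (w x:ℂ)‖
                = ‖Complex.exp (h * (w x:ℂ)) - (1 + h * (w x:ℂ))‖ := by
                  rw [sub_sub]
              _ ≤ ‖h * ↑(w x)‖ ^ 2 := le_trans this h34
              _ ≤ ‖h‖^2 * W^2 := habs
          have hez : ‖Complex.exp (z * (w x:ℂ))‖ ≤ Real.exp (‖z‖ * W + W) := by
            rw [Complex.norm_exp]
            refine Real.exp_le_exp.2 ?_
            have h1 : (z * (w x : ℂ)).re = z.re * w x := by simp [Complex.mul_re]
            rw [h1]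
            calc z.re * w x ≤ |z.re * w x| := le_abs_self _
              _ = |z.re| * |w x| := abs_mul _ _
              _ ≤ ‖z‖ * W := mul_le_mul (Complex.abs_re_le_norm z) hx (abs_nonneg _)
                  (norm_nonneg z)
              _ ≤ ‖z‖ * W + W := by linarith
          calc ‖Complex.exp (z * (w x:ℂ))‖ * ‖Complex.exp (h * (w x:ℂ)) - 1 - h * (w x:ℂ)‖ *
                ‖(f : X → ℂ) x‖
              ≤ Real.exp (‖z‖ * W + W) * (‖h‖^2 * W^2) * ‖(f : X → ℂ) x‖ := by
                refine mul_le_mul_of_nonneg_right ?_ (norm_nonneg _)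
                exact mul_le_mul hez hb2 (norm_nonneg _) (Real.exp_nonneg _)
            _ = (C₀ * ‖h‖ ^ 2) * ‖(f : X → ℂ) x‖ := by rw [hC₀]; ring_nf
        have h2 := eLpNorm_le_mul_eLpNorm_of_ae_le_mul hptw p
        have h3 : ENNReal.ofReal (C₀ * ‖h‖ ^ 2) * eLpNorm (f : X → ℂ) p μ ≠ ∞ :=
          ENNReal.mul_ne_top ofReal_ne_top (Lp.eLpNorm_ne_top f)
        calc (eLpNorm _ p μ).toReal
            ≤ (ENNReal.ofReal (C₀ * ‖h‖ ^ 2) * eLpNorm (f : X → ℂ) p μ).toReal :=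
              ENNReal.toReal_mono h3 h2
          _ = (C₀ * ‖h‖ ^ 2) * ‖f‖ := by
              rw [ENNReal.toReal_mul, ENNReal.toReal_ofReal (by positivity), Lp.norm_def]
          _ = (C₀ * ‖f‖) * ‖h‖ ^ 2 := by ring
      -- conclude littleO
      rw [Asymptotics.isLittleO_iff]
      intro c hc
      have hδpos : 0 < min (1/(W+1)) (c / (C₀ * ‖f‖ + 1)) := by positivity
      rw [Metric.eventually_nhds_iff]
      refine ⟨min (1/(W+1)) (c / (C₀ * ‖f‖ + 1)), hδpos, fun {z'} hz' => ?_⟩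
      rw [dist_eq_norm] at hz'
      have h1 : ‖z' - z‖ ≤ 1/(W+1) := le_trans hz'.le (min_le_left _ _)
      have h2 : ‖z' - z‖ ≤ c / (C₀ * ‖f‖ + 1) := le_trans hz'.le (min_le_right _ _)
      calc ‖E z' - E z - (z' - z) • (hmem' z).toLp _‖
          ≤ (C₀ * ‖f‖) * ‖z' - z‖ ^ 2 := hest z' h1
        _ = ((C₀ * ‖f‖) * ‖z' - z‖) * ‖z' - z‖ := by ring
        _ ≤ c * ‖z' - z‖ := by
            refine mul_le_mul_of_nonneg_right ?_ (norm_nonneg _)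
            calc (C₀ * ‖f‖) * ‖z' - z‖ ≤ (C₀ * ‖f‖) * (c / (C₀ * ‖f‖ + 1)) :=
                  mul_le_mul_of_nonneg_left h2 (by positivity)
              _ ≤ c := by
                  rw [mul_div_assoc']
                  rw [div_le_iff₀ (by positivity)]
                  nlinarith [mul_nonneg hC₀0 (norm_nonneg f)]
    -- the analytic function F
    set F : ℂ → Lp ℂ p μ := fun z => (A.comp Mu) (E z) with hF
    have hEdiff : Differentiable ℂ E := fun z => (hderiv z).differentiableAt
    have hFdiff : Differentiable ℂ F := (A.comp Mu).differentiable.comp hEdiff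
    have hMuE : ∀ z : ℂ, ((Mu (E z) : Lp ℂ p μ) : X → ℂ) =ᵐ[μ]
        fun x => (u x : ℂ) * (Complex.exp (z * (w x:ℂ)) * (f : X → ℂ) x) := by
      intro z
      refine (hMu (E z)).trans ?_
      filter_upwards [MemLp.coeFn_toLp (hmem z)] with x hx
      simp only [hE]
      rw [hx]
    have hMvE : ∀ z : ℂ, ((Mv (E z) : Lp ℂ p μ) : X → ℂ) =ᵐ[μ]
        fun x => (v x : ℂ) * (Complex.exp (z * (w x:ℂ)) * (f : X → ℂ) x) := by
      intro z
      refine (hMv (E z)).trans ?_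
      filter_upwards [MemLp.coeFn_toLp (hmem z)] with x hx
      simp only [hE]
      rw [hx]
    have hEone : ∀ z : ℂ, z.re = 0 → ‖E z‖ ≤ 1 * ‖f‖ := by
      intro z hz
      refine hEnorm z 1 zero_le_one (Eventually.of_forall fun x => ?_)
      rw [Complex.norm_exp]
      have h1 : (z * (w x : ℂ)).re = z.re * w x := by simp [Complex.mul_re]
      rw [h1, hz, zero_mul, Real.exp_zero]
    have ha : ∀ z : ℂ, z.re = 0 → ‖F z‖ ≤ ‖A.comp Mu‖ * ‖f‖ := by
      intro z hz
      calc ‖F z‖ ≤ ‖A.comp Mu‖ * ‖E z‖ := (A.comp Mu).le_opNorm _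
        _ ≤ ‖A.comp Mu‖ * (1 * ‖f‖) :=
            mul_le_mul_of_nonneg_left (hEone z hz) (norm_nonneg _)
        _ = ‖A.comp Mu‖ * ‖f‖ := by rw [one_mul]
    have hb1 : ∀ z : ℂ, z.re = 1 → ‖F z‖ ≤ ‖A.comp Mv‖ * ‖f‖ := by
      intro z hz
      have heq : Mu (E z) = Mv (E (z - 1)) := by
        refine Lp.ext ((hMuE z).trans (EventuallyEq.trans ?_ (hMvE (z-1)).symm))
        filter_upwards [hub, hvb] with x hu hv
        have hup : 0 < u x := lt_of_lt_of_le hε hu.1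
        have hvp : 0 < v x := lt_of_lt_of_le hε hv.1
        have hexp : Complex.exp (-(w x : ℂ)) = ((u x / v x : ℝ) : ℂ) := by
          rw [← Complex.ofReal_neg, ← Complex.ofReal_exp]
          norm_cast
          show Real.exp (-(Real.log (v x) - Real.log (u x))) = u x / v x
          rw [neg_sub, Real.exp_sub, Real.exp_log hup, Real.exp_log hvp]
        have hsplit : Complex.exp ((z - 1) * (w x:ℂ)) =
            Complex.exp (z * (w x:ℂ)) * Complex.exp (-(w x:ℂ)) := by
          rw [← Complex.exp_add]
          congr 1
          ring
        rw [hsplit, hexp]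
        have hvne : ((v x : ℝ) : ℂ) ≠ 0 := Complex.ofReal_ne_zero.mpr hvp.ne'
        rw [Complex.ofReal_div]
        field_simp
      have hzre : (z - 1).re = 0 := by rw [Complex.sub_re, Complex.one_re, hz, sub_self]
      have : F z = (A.comp Mv) (E (z-1)) := by
        rw [hF]
        simp only [ContinuousLinearMap.comp_apply]
        rw [heq]
      rw [this]
      calc ‖(A.comp Mv) (E (z-1))‖ ≤ ‖A.comp Mv‖ * ‖E (z-1)‖ := (A.comp Mv).le_opNorm _
        _ ≤ ‖A.comp Mv‖ * (1 * ‖f‖) :=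
            mul_le_mul_of_nonneg_left (hEone _ hzre) (norm_nonneg _)
        _ = ‖A.comp Mv‖ * ‖f‖ := by rw [one_mul]
    have hstrip : ∀ z : ℂ, z.re ∈ Set.Icc (0:ℝ) 1 →
        ‖F z‖ ≤ ‖A.comp Mu‖ * (Real.exp W * ‖f‖) := by
      intro z hz
      have h1 : ‖E z‖ ≤ Real.exp W * ‖f‖ := by
        refine hEnorm z (Real.exp W) (Real.exp_nonneg _) ?_
        filter_upwards [hwB] with x hx
        rw [Complex.norm_exp]
        refine Real.exp_le_exp.2 ?_
        have h1 : (z * (w x : ℂ)).re = z.re * w x := by simp [Complex.mul_re]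
        rw [h1]
        rcases le_or_gt 0 (w x) with h|h
        · calc z.re * w x ≤ 1 * w x := mul_le_mul_of_nonneg_right hz.2 h
            _ = w x := one_mul _
            _ ≤ W := le_trans (le_abs_self _) hx
        · calc z.re * w x ≤ 0 := mul_nonpos_of_nonneg_of_nonpos hz.1 h.le
            _ ≤ W := hW0
      calc ‖F z‖ ≤ ‖A.comp Mu‖ * ‖E z‖ := (A.comp Mu).le_opNorm _
        _ ≤ _ := mul_le_mul_of_nonneg_left h1 (norm_nonneg _)
    have had := Complex.HadamardThreeLines.norm_le_interp_of_mem_verticalClosedStrip' (f := F)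
      (z := (θ:ℂ)) (a := ‖A.comp Mu‖ * ‖f‖) (b := ‖A.comp Mv‖ * ‖f‖) (l := 0) (u := 1) zero_lt_one
      (by
        show (θ:ℂ).re ∈ Set.Icc (0:ℝ) 1
        rw [Complex.ofReal_re]
        exact ⟨hθ0, hθ1⟩)
      hFdiff.diffContOnCl
      ⟨‖A.comp Mu‖ * (Real.exp W * ‖f‖), by
        rintro y ⟨z, hz, rfl⟩
        exact hstrip z hz⟩
      (fun z hz => ha z hz) (fun z hz => hb1 z hz)
    have hθpt : (A.comp Mθ) f = F (θ:ℂ) := by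
      have heq : Mθ f = Mu (E (θ:ℂ)) := by
        refine Lp.ext ((hMθ f).trans (EventuallyEq.trans ?_ (hMuE (θ:ℂ)).symm))
        filter_upwards [hub, hvb] with x hu hv
        have hup : 0 < u x := lt_of_lt_of_le hε hu.1
        have hvp : 0 < v x := lt_of_lt_of_le hε hv.1
        have hre : u x ^ (1-θ) * v x ^ θ = u x * Real.exp (θ * w x) := by
          rw [Real.rpow_def_of_pos hup, Real.rpow_def_of_pos hvp, ← Real.exp_add]
          show _ = u x * Real.exp (θ * (Real.log (v x) - Real.log (u x)))
          rw [← Real.exp_log hup]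
          rw [← Real.exp_add]
          congr 1
          rw [Real.log_exp]
          ring
        rw [hre]
        push_cast
        ring
      rw [hF]
      simp only [ContinuousLinearMap.comp_apply]
      rw [heq]
    have hconc : ‖F (θ:ℂ)‖ ≤
        (‖A.comp Mu‖ * ‖f‖) ^ (1 - θ) * (‖A.comp Mv‖ * ‖f‖) ^ θ := by
      have h1 : ((θ:ℂ)).re = θ := Complex.ofReal_re θ
      rw [h1] at had
      simp only [sub_zero, div_one] at had
      exact had
    rw [hθpt]
    calc ‖F (θ:ℂ)‖ ≤ (‖A.comp Mu‖ * ‖f‖) ^ (1-θ) * (‖A.comp Mv‖ * ‖f‖) ^ θ := hconc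
      _ = (‖A.comp Mu‖ ^ (1-θ) * ‖A.comp Mv‖ ^ θ) * ‖f‖ := by
          rw [Real.mul_rpow (norm_nonneg _) (norm_nonneg _),
            Real.mul_rpow (norm_nonneg _) (norm_nonneg _), mul_mul_mul_comm,
            ← Real.rpow_add hfpos]
          norm_num
  exact ContinuousLinearMap.opNorm_le_bound _ (by positivity) key



set_option maxHeartbeats 1000000 in
theorem induction_lemma {m : ℕ} (t : Fin m → X → ℝ) (htm : ∀ i, Measurable (t i))
    {ε K : ℝ} (hε : 0 < ε) (hεK : ε ≤ K)
    (htb : ∀ᵐ x ∂μ, ∀ i, t i x ∈ Set.Icc ε K)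
    (ht0 : ∀ i x, 0 ≤ t i x)
    (T : Fin m → (Lp ℂ p μ →L[ℂ] Lp ℂ p μ))
    (hT : ∀ i, IsMulOp μ p (fun x => (t i x : ℂ)) (T i))
    (A : Lp ℂ p μ →L[ℂ] Lp ℂ p μ) :
    ∀ s : Finset (Fin m), s.Nonempty →
      ∀ G : Lp ℂ p μ →L[ℂ] Lp ℂ p μ,
        IsMulOp μ p (fun x => (((∏ i ∈ s, t i x) ^ ((s.card : ℝ)⁻¹) : ℝ) : ℂ)) G →
        ‖A.comp G‖ ^ s.card ≤ ∏ i ∈ s, ‖A.comp (T i)‖ := by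
  have hK0 : 0 < K := lt_of_lt_of_le hε hεK
  intro s
  induction s using Finset.induction_on with
  | empty => rintro ⟨x, hx⟩; cases hx
  | @insert a s' ha ih =>
    intro _ G hG
    rcases s'.eq_empty_or_nonempty with rfl | hs'
    · -- singleton base case
      have hGa : IsMulOp μ p (fun x => (t a x : ℂ)) G := by
        refine hG.congr (Eventually.of_forall fun x => ?_)
        norm_num
      have hGT : G = T a := hGa.ext (hT a)
      rw [hGT]
      norm_num
    · -- inductive step
      set k := s'.card with hk
      have hk1 : 1 ≤ k := Finset.card_pos.mpr hs'
      have hkR : (0:ℝ) < (k:ℝ) := by exact_mod_cast hk1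
      have hk1R : (0:ℝ) < (k:ℝ) + 1 := by linarith
      set θ : ℝ := ((k:ℝ) + 1)⁻¹ with hθdef
      have hθ0 : 0 ≤ θ := by positivity
      have hθ1 : θ ≤ 1 := by
        rw [hθdef]
        rw [inv_le_one_iff₀]
        right; linarith
      set u : X → ℝ := fun x => (∏ i ∈ s', t i x) ^ ((k:ℝ)⁻¹) with hu
      have hum : Measurable u := by
        refine Measurable.pow ?_ measurable_const
        exact Finset.measurable_prod s' (fun i _ => htm i)
      have hu0 : ∀ x, 0 ≤ u x := fun x =>
        Real.rpow_nonneg (Finset.prod_nonneg fun i _ => ht0 i x) _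
      have hub : ∀ᵐ x ∂μ, u x ∈ Set.Icc ε K := by
        filter_upwards [htb] with x hx
        have hprodlb : ε ^ k ≤ ∏ i ∈ s', t i x := by
          rw [hk]
          rw [← Finset.prod_const]
          exact Finset.prod_le_prod (fun i _ => hε.le) (fun i _ => (hx i).1)
        have hprodub : ∏ i ∈ s', t i x ≤ K ^ k := by
          rw [hk, ← Finset.prod_const]
          exact Finset.prod_le_prod (fun i _ => ht0 i x) (fun i _ => (hx i).2)
        constructor
        · have h1 : (ε ^ k : ℝ) ^ ((k:ℝ)⁻¹) ≤ u x :=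
            Real.rpow_le_rpow (by positivity) hprodlb (by positivity)
          refine le_trans (le_of_eq ?_) h1
          rw [← Real.rpow_natCast ε k, ← Real.rpow_mul hε.le,
            mul_inv_cancel₀ hkR.ne', Real.rpow_one]
        · have h1 : u x ≤ (K ^ k : ℝ) ^ ((k:ℝ)⁻¹) :=
            Real.rpow_le_rpow (Finset.prod_nonneg fun i _ => ht0 i x) hprodub (by positivity)
          refine le_trans h1 (le_of_eq ?_)
          rw [← Real.rpow_natCast K k, ← Real.rpow_mul hK0.le,
            mul_inv_cancel₀ hkR.ne', Real.rpow_one]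
      have humbd : ∀ᵐ x ∂μ, ‖((u x : ℝ) : ℂ)‖ ≤ K := by
        filter_upwards [hub] with x hx
        rw [Complex.norm_real, Real.norm_eq_abs, _root_.abs_of_nonneg (hu0 x)]
        exact hx.2
      set Mu : Lp ℂ p μ →L[ℂ] Lp ℂ p μ :=
        mulOp (fun x => ((u x : ℝ) : ℂ)) (Complex.measurable_ofReal.comp hum).aestronglyMeasurable
          K hK0.le humbd with hMudef
      have hMu : IsMulOp μ p (fun x => ((u x : ℝ) : ℂ)) Mu := isMulOp_mulOp _ _ _ _ _
      have hcard : (insert a s').card = k + 1 := by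
        rw [Finset.card_insert_of_notMem ha]
      -- identify the symbol of G with u^(1-θ) v^θ
      have hsym : ∀ x, (∏ i ∈ insert a s', t i x) ^ (((insert a s').card : ℝ)⁻¹) =
          u x ^ (1 - θ) * (t a x) ^ θ := by
        intro x
        have hP0 : 0 ≤ ∏ i ∈ s', t i x := Finset.prod_nonneg fun i _ => ht0 i x
        rw [Finset.prod_insert ha, hcard]
        have hc : ((k + 1 : ℕ) : ℝ) = (k:ℝ) + 1 := by push_cast; ring
        rw [hc]
        rw [Real.mul_rpow (ht0 a x) hP0]
        have h2 : u x ^ (1 - θ) = (∏ i ∈ s', t i x) ^ (((k:ℝ)+1)⁻¹) := by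
          rw [hu]
          rw [← Real.rpow_mul hP0]
          congr 1
          rw [hθdef]
          field_simp
          ring
        rw [h2, mul_comm]
      have hMθ : IsMulOp μ p (fun x => ((u x ^ (1-θ) * (t a x) ^ θ : ℝ) : ℂ)) G := by
        exact hG.congr (Eventually.of_forall fun x =>
          congrArg (fun r : ℝ => (r : ℂ)) (hsym x))
      -- apply the interpolation core
      have hcore := core hum (htm a) hε hub
        (by filter_upwards [htb] with x hx using hx a) hθ0 hθ1 hMu (hT a) hMθ A
      -- raise to the (k+1)-st power
      have hpow : ‖A.comp G‖ ^ (k+1) ≤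
          (‖A.comp Mu‖ ^ (1-θ) * ‖A.comp (T a)‖ ^ θ) ^ (k+1) :=
        pow_le_pow_left₀ (norm_nonneg _) hcore _
      have hpow2 : (‖A.comp Mu‖ ^ (1-θ) * ‖A.comp (T a)‖ ^ θ) ^ (k+1) =
          ‖A.comp Mu‖ ^ k * ‖A.comp (T a)‖ := by
        rw [← Real.rpow_natCast (‖A.comp Mu‖ ^ (1-θ) * ‖A.comp (T a)‖ ^ θ) (k+1)]
        rw [Real.mul_rpow (Real.rpow_nonneg (norm_nonneg _) _)
          (Real.rpow_nonneg (norm_nonneg _) _)]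
        rw [← Real.rpow_mul (norm_nonneg _), ← Real.rpow_mul (norm_nonneg _)]
        have hc : ((k + 1 : ℕ) : ℝ) = (k:ℝ) + 1 := by push_cast; ring
        rw [hc]
        have e1 : (1 - θ) * ((k:ℝ) + 1) = (k:ℝ) := by
          rw [hθdef]; field_simp; ring
        have e2 : θ * ((k:ℝ) + 1) = 1 := by
          rw [hθdef]; field_simp
        rw [e1, e2, Real.rpow_one, Real.rpow_natCast]
      rw [hcard, Finset.prod_insert ha]
      calc ‖A.comp G‖ ^ (k+1) ≤ ‖A.comp Mu‖ ^ k * ‖A.comp (T a)‖ := by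
            rw [← hpow2]; exact hpow
        _ ≤ (∏ i ∈ s', ‖A.comp (T i)‖) * ‖A.comp (T a)‖ := by
            refine mul_le_mul_of_nonneg_right ?_ (norm_nonneg _)
            exact ih hs' Mu hMu
        _ = ‖A.comp (T a)‖ * ∏ i ∈ s', ‖A.comp (T i)‖ := by ring


end CohenAux

open CohenAux Set Filter

set_option maxHeartbeats 1000000 in
/-- Right-handed operator norm analogue of Cohen's inequality on `L^p`, `1 ≤ p < ∞`:
if `D₁, …, Dₘ` are bounded multiplication operators with `D₁ ⋯ Dₘ = I`, then
`‖A‖^m ≤ ‖AD₁‖ ⋯ ‖ADₘ‖`. -/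
theorem norm_pow_le_prod_norm_mul_right
    {X : Type*} [MeasurableSpace X] (μ : Measure X) [SigmaFinite μ]
    (p : ℝ≥0∞) [Fact (1 ≤ p)] (hp : p ≠ ∞) (m : ℕ)
    (D : Fin m → (Lp ℂ p μ →L[ℂ] Lp ℂ p μ)) (d : Fin m → X → ℂ)
    (hD : ∀ i, ∀ f : Lp ℂ p μ, (D i f : X → ℂ) =ᵐ[μ] fun x => d i x * f x)
    (hprod : (fun x => ∏ i, d i x) =ᵐ[μ] fun _ => 1)
    (A : Lp ℂ p μ →L[ℂ] Lp ℂ p μ) :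
    ‖A‖ ^ m ≤ ∏ i, ‖A.comp (D i)‖ := by
  rcases Nat.eq_zero_or_pos m with rfl | hm
  · simp
  -- measurable representatives of the symbols
  have hmeas : ∀ i, AEStronglyMeasurable (d i) μ := fun i => symbol_aestronglyMeasurable (hD i)
  set d' : Fin m → X → ℂ := fun i => (hmeas i).mk _ with hd'def
  have hd'm : ∀ i, Measurable (d' i) := fun i => ((hmeas i).stronglyMeasurable_mk).measurable
  have hdd' : ∀ i, d i =ᵐ[μ] d' i := fun i => (hmeas i).ae_eq_mk
  have hD' : ∀ i, IsMulOp μ p (d' i) (D i) := by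
    intro i f
    refine (hD i f).trans ?_
    filter_upwards [hdd' i] with x hx
    rw [hx]
  have hbd : ∀ i, ∀ᵐ x ∂μ, ‖d' i x‖ ≤ ‖D i‖ := fun i => symbol_ae_norm_le hp (hd'm i) (hD' i)
  have hprod' : (fun x => ∏ i, d' i x) =ᵐ[μ] fun _ => 1 := by
    have hall : ∀ᵐ x ∂μ, ∀ i, d i x = d' i x := ae_all_iff.2 fun i => hdd' i
    filter_upwards [hall, hprod] with x hx h1
    rw [← h1]
    exact (Finset.prod_congr rfl fun i _ => (hx i).symm)
  -- constants
  set K : ℝ := 1 + ∑ i, ‖D i‖ with hKdef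
  have hK1 : 1 ≤ K := le_add_of_nonneg_right (Finset.sum_nonneg fun i _ => norm_nonneg _)
  have hK0 : 0 < K := lt_of_lt_of_le zero_lt_one hK1
  have hDK : ∀ i, ‖D i‖ ≤ K := by
    intro i
    have h1 : ‖D i‖ ≤ ∑ j, ‖D j‖ :=
      Finset.single_le_sum (fun j _ => norm_nonneg _) (Finset.mem_univ i)
    rw [hKdef]; linarith
  set ε : ℝ := (K ^ m)⁻¹ with hεdef
  have hε : 0 < ε := by positivity
  have hKm1 : 1 ≤ K ^ m := one_le_pow₀ hK1
  have hεK : ε ≤ K := by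
    rw [hεdef]
    calc (K ^ m)⁻¹ ≤ 1 := by
          rw [inv_le_one_iff₀]; right; exact hKm1
      _ ≤ K := hK1
  -- modulus and phase
  set t : Fin m → X → ℝ := fun i x => ‖d' i x‖ with htdef
  have htm : ∀ i, Measurable (t i) := fun i => (hd'm i).norm
  have ht0 : ∀ i x, 0 ≤ t i x := fun i x => norm_nonneg _
  set ρ : Fin m → X → ℂ := fun i x => (starRingEnd ℂ) (d' i x) / ((‖d' i x‖ : ℝ) : ℂ) with hρdef
  have hρm : ∀ i, Measurable (ρ i) :=
    fun i => (Complex.conjLIE.continuous.measurable.comp (hd'm i)).div (Complex.measurable_ofReal.comp (hd'm i).norm)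
  have hρbd : ∀ i x, ‖ρ i x‖ ≤ 1 := by
    intro i x
    rcases eq_or_ne (d' i x) 0 with h | h
    · simp [hρdef, h]
    · rw [hρdef]
      rw [norm_div, RCLike.norm_conj, Complex.norm_real, Real.norm_eq_abs,
        _root_.abs_of_nonneg (norm_nonneg _), div_self (norm_ne_zero_iff.mpr h)]
  have hmul : ∀ i x, d' i x * ρ i x = ((t i x : ℝ) : ℂ) := by
    intro i x
    rcases eq_or_ne (d' i x) 0 with h | h
    · simp [hρdef, htdef, h]
    · rw [hρdef, htdef]
      have ha : ((‖d' i x‖ : ℝ) : ℂ) ≠ 0 :=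
        Complex.ofReal_ne_zero.mpr (norm_ne_zero_iff.mpr h)
      rw [mul_div_assoc', Complex.mul_conj, Complex.normSq_eq_norm_sq]
      rw [div_eq_iff ha]
      push_cast
      ring
  -- the operators
  set T : Fin m → (Lp ℂ p μ →L[ℂ] Lp ℂ p μ) := fun i =>
    mulOp (fun x => ((t i x : ℝ) : ℂ))
      (Complex.measurable_ofReal.comp (htm i)).aestronglyMeasurable K hK0.le
      (by
        filter_upwards [hbd i] with x hx
        rw [Complex.norm_real, Real.norm_eq_abs, _root_.abs_of_nonneg (ht0 i x)]
        exact le_trans hx (hDK i)) with hTdef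
  have hT : ∀ i, IsMulOp μ p (fun x => ((t i x : ℝ) : ℂ)) (T i) :=
    fun i => isMulOp_mulOp _ _ _ _ _
  set Mρ : Fin m → (Lp ℂ p μ →L[ℂ] Lp ℂ p μ) := fun i =>
    mulOp (ρ i) (hρm i).aestronglyMeasurable 1 zero_le_one
      (Eventually.of_forall (hρbd i)) with hMρdef
  have hMρ : ∀ i, IsMulOp μ p (ρ i) (Mρ i) := fun i => isMulOp_mulOp _ _ _ _ _
  have hTi : ∀ i, T i = (D i).comp (Mρ i) := by
    intro i
    refine (hT i).ext (((hD' i).comp (hMρ i)).congr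
      (Eventually.of_forall fun x => hmul i x))
  have hTnorm : ∀ i, ‖A.comp (T i)‖ ≤ ‖A.comp (D i)‖ := by
    intro i
    rw [hTi i, ← ContinuousLinearMap.comp_assoc]
    calc ‖(A.comp (D i)).comp (Mρ i)‖ ≤ ‖A.comp (D i)‖ * ‖Mρ i‖ :=
          ContinuousLinearMap.opNorm_comp_le _ _
      _ ≤ ‖A.comp (D i)‖ * 1 :=
          mul_le_mul_of_nonneg_left (norm_mulOp_le _ _ _ _ _) (norm_nonneg _)
      _ = ‖A.comp (D i)‖ := mul_one _
  -- a.e. bounds on t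
  have haeprod : ∀ᵐ x ∂μ, (∏ j, t j x) = 1 := by
    filter_upwards [hprod'] with x hx
    have h1 : (∏ j, t j x) = ‖∏ j, d' j x‖ := by
      rw [htdef, norm_prod]
    rw [h1, hx]
    norm_num
  have htb : ∀ᵐ x ∂μ, ∀ i, t i x ∈ Icc ε K := by
    filter_upwards [ae_all_iff.2 hbd, haeprod] with x hx habs
    intro i
    have hub : ∀ j, t j x ≤ K := fun j => le_trans (hx j) (hDK j)
    refine ⟨?_, hub i⟩
    have hsplit : t i x * ∏ j ∈ Finset.univ.erase i, t j x = 1 := by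
      rw [← habs]
      exact Finset.mul_prod_erase Finset.univ (fun j => t j x) (Finset.mem_univ i)
    have hPne : (∏ j ∈ Finset.univ.erase i, t j x) ≠ 0 := by
      intro h0
      rw [h0, mul_zero] at hsplit
      norm_num at hsplit
    have hP0 : 0 < ∏ j ∈ Finset.univ.erase i, t j x :=
      lt_of_le_of_ne (Finset.prod_nonneg fun j _ => ht0 j x) (Ne.symm hPne)
    have hPK : (∏ j ∈ Finset.univ.erase i, t j x) ≤ K ^ m := by
      have hcsub : (Finset.univ.erase i).card ≤ m := by
        have h1 : (Finset.univ.erase i).card ≤ (Finset.univ : Finset (Fin m)).card :=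
          Finset.card_le_card (Finset.erase_subset _ _)
        simpa using h1
      calc (∏ j ∈ Finset.univ.erase i, t j x) ≤ ∏ _j ∈ Finset.univ.erase i, K :=
            Finset.prod_le_prod (fun j _ => ht0 j x) (fun j _ => hub j)
        _ = K ^ (Finset.univ.erase i).card := Finset.prod_const K
        _ ≤ K ^ m := pow_le_pow_right₀ hK1 hcsub
    have hti : t i x = (∏ j ∈ Finset.univ.erase i, t j x)⁻¹ :=
      eq_inv_of_mul_eq_one_left hsplit
    rw [hti, hεdef]
    exact inv_anti₀ hP0 hPK
  -- apply the induction lemma with the identity operator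
  have : Nonempty (Fin m) := ⟨⟨0, hm⟩⟩
  have huniv : (Finset.univ : Finset (Fin m)).Nonempty := Finset.univ_nonempty
  have hid : IsMulOp μ p
      (fun x => (((∏ i ∈ Finset.univ, t i x) ^ (((Finset.univ : Finset (Fin m)).card : ℝ)⁻¹) :
        ℝ) : ℂ)) (ContinuousLinearMap.id ℂ (Lp ℂ p μ)) := by
    intro f
    refine Filter.EventuallyEq.trans (by rw [ContinuousLinearMap.id_apply]) ?_
    filter_upwards [haeprod] with x hx
    rw [hx, Real.one_rpow, Complex.ofReal_one, one_mul]
  have hmain := induction_lemma t htm hε hεK htb ht0 T hT A Finset.univ huniv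
    (ContinuousLinearMap.id ℂ (Lp ℂ p μ)) hid
  rw [ContinuousLinearMap.comp_id] at hmain
  have hcard : (Finset.univ : Finset (Fin m)).card = m := by simp
  rw [hcard] at hmain
  exact le_trans hmain
    (Finset.prod_le_prod (fun i _ => norm_nonneg _) (fun i _ => hTnorm i))
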